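/- Let f be a probability density on 𝕊² (f measurable, f ≥ 0 σ-a.e., ∫_{𝕊²} f dσ = 1) and set Q = ∫_{𝕊²} (m mᵀ − I/3) f(m) dσ(m). Then Q is a real symmetric traceless 3×3 matrix and every eigenvalue λ of Q satisfies −1/3 < λ < 2/3; that is, Q ∈ 𝒬_phy. -/

import Mathlib

open MeasureTheory Real Pointwise Matrix
open scoped RealInnerProductSpace

noncomputable section

abbrev E3 : Type := EuclideanSpace ℝ (Fin 3)
abbrev S2 : Type := Metric.sphere (0 : E3) 1
abbrev Mat3 : Type := Matrix (Fin 3) (Fin 3) ℝ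

/-- The standard (rotation-invariant) surface measure on 𝕊², of total mass 4π. -/
noncomputable def sigma3 : Measure S2 := (volume : Measure E3).toSphere

/-- The quadratic form `m · B m` for `m ∈ 𝕊²`. -/
noncomputable def quadForm (B : Mat3) (m : S2) : ℝ :=
  ∑ i, ∑ j, (m : E3) i * B i j * (m : E3) j

/-- The Bingham partition function `Z_B = ∫ exp(m·Bm) dσ(m)`. -/
noncomputable def ZB (B : Mat3) : ℝ := ∫ m : S2, Real.exp (quadForm B m) ∂sigma3

/-- The Bingham density `f_B(m) = exp(m·Bm)/Z_B`. -/
noncomputable def bingham (B : Mat3) (m : S2) : ℝ := Real.exp (quadForm B m) / ZB B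

/-- The traceless second moment `∫ (m mᵀ − I/3) f dσ` of a density `f` on 𝕊². -/
noncomputable def secondMoment (f : S2 → ℝ) : Mat3 :=
  Matrix.of fun i j =>
    ∫ m : S2, ((m : E3) i * (m : E3) j - (if i = j then (1 : ℝ) / 3 else 0)) * f m ∂sigma3

/-- `Q ∈ 𝒬_phy`: symmetric, traceless, with all eigenvalues in `(−1/3, 2/3)`. -/
def Qphy (Q : Mat3) : Prop :=
  Q.IsSymm ∧ Q.trace = 0 ∧ ∀ μ ∈ spectrum ℝ Q, -(1 / 3 : ℝ) < μ ∧ μ < 2 / 3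

lemma coord_cont (i : Fin 3) : Continuous (fun m : S2 => (m : E3) i) :=
  (EuclideanSpace.proj i).continuous.comp continuous_subtype_val

lemma sum_sq_coords (m : S2) : ∑ i, ((m : E3) i)^2 = 1 := by
  have h1 : ‖(m : E3)‖ = 1 := mem_sphere_zero_iff_norm.mp m.2
  rw [EuclideanSpace.norm_eq] at h1
  have h2 : ∑ i, ‖(m : E3) i‖ ^ 2 = 1 := by
    have := congrArg (· ^ 2) h1
    simpa [Real.sq_sqrt (Finset.sum_nonneg fun i _ => sq_nonneg _)] using this
  simpa [sq_abs] using h2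

lemma coord_sq_le (m : S2) (i : Fin 3) : ((m : E3) i)^2 ≤ 1 := by
  calc ((m : E3) i)^2 ≤ ∑ j, ((m : E3) j)^2 :=
        Finset.single_le_sum (f := fun j => ((m : E3) j)^2) (fun j _ => sq_nonneg _) (Finset.mem_univ i)
    _ = 1 := sum_sq_coords m

lemma coord_abs_le (m : S2) (i : Fin 3) : |(m : E3) i| ≤ 1 := by
  have h := coord_sq_le m i
  nlinarith [abs_nonneg ((m : E3) i), sq_abs ((m : E3) i)]

lemma integrand_abs_le (m : S2) (i j : Fin 3) :
    |(m : E3) i * (m : E3) j - (if i = j then (1 : ℝ) / 3 else 0)| ≤ 2 := by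
  have h1 := coord_abs_le m i
  have h2 := coord_abs_le m j
  have h3 : |(m : E3) i * (m : E3) j| ≤ 1 := by
    rw [abs_mul]
    calc |(m : E3) i| * |(m : E3) j| ≤ 1 * 1 :=
          mul_le_mul h1 h2 (abs_nonneg _) zero_le_one
      _ = 1 := one_mul 1
  have h4 : |(if i = j then (1 : ℝ) / 3 else 0)| ≤ 1 := by split_ifs <;> norm_num [abs_of_nonneg]
  calc |(m : E3) i * (m : E3) j - (if i = j then (1 : ℝ) / 3 else 0)|
      ≤ |(m : E3) i * (m : E3) j| + |(if i = j then (1 : ℝ) / 3 else 0)| := abs_sub _ _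
    _ ≤ 1 + 1 := add_le_add h3 h4
    _ = 2 := by norm_num

lemma sigma3_null_of_submodule (p : Submodule ℝ E3) (hp : p ≠ ⊤) {s : Set S2}
    (hs : MeasurableSet s) (hsub : ∀ m : S2, m ∈ s → (m : E3) ∈ p) : sigma3 s = 0 := by
  rw [sigma3, Measure.toSphere_apply' _ hs]
  have hsubset : (Set.Ioo (0:ℝ) 1 • ((↑) '' s : Set E3)) ⊆ (p : Set E3) := by
    rintro x hx
    rw [Set.mem_smul] at hx
    obtain ⟨r, y, hr, hy, rfl⟩ := hx
    obtain ⟨m, hm, rfl⟩ := hy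
    exact p.smul_mem r (hsub m hm)
  rw [measure_mono_null hsubset (Measure.addHaar_submodule _ p hp), mul_zero]

def vE (v : Fin 3 → ℝ) : E3 := (WithLp.equiv 2 (Fin 3 → ℝ)).symm v

lemma vE_ne_zero {v : Fin 3 → ℝ} (hv : v ≠ 0) : vE v ≠ 0 := by
  intro h
  exact hv (by simpa [vE, Equiv.symm_apply_eq] using h)

lemma inner_vE (v : Fin 3 → ℝ) (x : E3) : ⟪vE v, x⟫ = ∑ i, v i * x i := by
  simp [PiLp.inner_apply, vE, RCLike.inner_apply]
  exact Finset.sum_congr rfl fun i _ => mul_comm _ _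

lemma norm_sq_vE (v : Fin 3 → ℝ) : ‖vE v‖^2 = ∑ i, v i ^ 2 := by
  rw [EuclideanSpace.norm_eq, Real.sq_sqrt (Finset.sum_nonneg fun i _ => sq_nonneg _)]
  simp [vE, sq_abs]

lemma null_zero {v : Fin 3 → ℝ} (hv : v ≠ 0) :
    sigma3 {m : S2 | ∑ i, v i * (m : E3) i = 0} = 0 := by
  apply sigma3_null_of_submodule ((ℝ ∙ (vE v))ᗮ)
  · intro h
    have : vE v ∈ (ℝ ∙ (vE v))ᗮ := h ▸ Submodule.mem_top
    have h2 := (Submodule.mem_orthogonal _ _).mp this (vE v) (Submodule.mem_span_singleton_self _)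
    exact vE_ne_zero hv (inner_self_eq_zero.mp h2)
  · have : Continuous (fun m : S2 => ∑ i, v i * (m : E3) i) :=
      continuous_finset_sum _ fun i _ => continuous_const.mul (coord_cont i)
    exact this.measurable (measurableSet_singleton 0)
  · intro m hm
    rw [Submodule.mem_orthogonal]
    intro u hu
    obtain ⟨r, rfl⟩ := Submodule.mem_span_singleton.mp hu
    rw [inner_smul_left]
    simp only [RCLike.star_def, starRingEnd_apply, star_trivial]
    rw [inner_vE]
    rw [Set.mem_setOf_eq] at hm
    rw [hm, mul_zero]

lemma null_max {v : Fin 3 → ℝ} (hv : v ≠ 0) :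
    sigma3 {m : S2 | (∑ i, v i * (m : E3) i)^2 = ∑ i, v i ^ 2} = 0 := by
  apply sigma3_null_of_submodule (ℝ ∙ (vE v))
  · intro h
    have h3 : Module.finrank ℝ E3 = 3 := by simp
    rw [← finrank_top ℝ E3, ← h, finrank_span_singleton (vE_ne_zero hv)] at h3
    norm_num at h3
  · have : Continuous (fun m : S2 => (∑ i, v i * (m : E3) i)^2) :=
      (continuous_finset_sum _ fun i _ => continuous_const.mul (coord_cont i)).pow 2
    exact this.measurable (measurableSet_singleton _)
  · intro m hm
    rw [Set.mem_setOf_eq] at hm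
    have hm0 : (m : E3) ≠ 0 := by
      intro h
      have := mem_sphere_zero_iff_norm.mp m.2
      rw [h] at this; simp at this
    have hmn : ‖(m : E3)‖ = 1 := mem_sphere_zero_iff_norm.mp m.2
    have habs : ‖⟪vE v, (m : E3)⟫‖ = ‖vE v‖ * ‖(m : E3)‖ := by
      rw [hmn, mul_one]
      have h1 : (⟪vE v, (m : E3)⟫)^2 = ‖vE v‖^2 := by
        rw [inner_vE, norm_sq_vE]; exact hm
      have := congrArg Real.sqrt h1
      rwa [Real.sqrt_sq_eq_abs, Real.sqrt_sq (norm_nonneg _)] at this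
    obtain ⟨r, -, hr⟩ := (norm_inner_eq_norm_iff (vE_ne_zero hv) hm0).mp habs
    rw [hr]
    exact Submodule.smul_mem _ _ (Submodule.mem_span_singleton_self _)

lemma moment_bounds (f : S2 → ℝ)
    (hpos : ∀ᵐ m ∂sigma3, 0 ≤ f m) (hprob : ∫ m, f m ∂sigma3 = 1)
    (hfi : Integrable f sigma3)
    {v : Fin 3 → ℝ} (hv : v ≠ 0) :
    0 < ∫ m, (∑ i, v i * (m:E3) i)^2 * f m ∂sigma3 ∧
    ∫ m, (∑ i, v i * (m:E3) i)^2 * f m ∂sigma3 < ∑ i, v i ^ 2 := by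
  set c := ∑ i, v i ^ 2 with hc
  set g : S2 → ℝ := fun m => (∑ i, v i * (m:E3) i)^2 with hgdef
  have hgc : Continuous g :=
    (continuous_finset_sum _ fun i _ => continuous_const.mul (coord_cont i)).pow 2
  have hg_le : ∀ m : S2, g m ≤ c := by
    intro m
    calc g m ≤ (∑ i, v i^2) * ∑ i, ((m:E3) i)^2 :=
          Finset.sum_mul_sq_le_sq_mul_sq _ _ _
      _ = c := by rw [sum_sq_coords, mul_one, hc]
  have hInt : Integrable (fun m => g m * f m) sigma3 := by
    refine hfi.bdd_mul hgc.measurable.aestronglyMeasurable (c := c) (Filter.Eventually.of_forall fun m => ?_)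
    rw [Real.norm_eq_abs, abs_of_nonneg (sq_nonneg _)]
    exact hg_le m
  have hae_nonneg : ∀ᵐ m ∂sigma3, 0 ≤ g m * f m :=
    hpos.mono fun m hm => mul_nonneg (sq_nonneg _) hm
  have hne_f : ¬ (f =ᵐ[sigma3] 0) := by
    intro h
    rw [integral_congr_ae h] at hprob
    simp at hprob
  constructor
  · rcases lt_or_eq_of_le (integral_nonneg_of_ae hae_nonneg) with h | h
    · exact h
    · exfalso
      have hEq : (fun m => g m * f m) =ᵐ[sigma3] 0 :=
        (integral_eq_zero_iff_of_nonneg_ae hae_nonneg hInt).mp h.symm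
      have aeZ : ∀ᵐ m : S2 ∂sigma3, ∑ i, v i * (m:E3) i ≠ 0 := by
        have := measure_eq_zero_iff_ae_notMem.mp (null_zero hv)
        exact this.mono fun m hm => hm
      apply hne_f
      filter_upwards [hEq, aeZ] with m h1 h2
      have : g m ≠ 0 := pow_ne_zero _ h2
      simpa [this] using h1
  · have hInt2 : Integrable (fun m => (c - g m) * f m) sigma3 := by
      refine hfi.bdd_mul ((continuous_const.sub hgc).measurable.aestronglyMeasurable)
        (c := c) (Filter.Eventually.of_forall fun m => ?_)
      rw [Real.norm_eq_abs, abs_of_nonneg (sub_nonneg.mpr (hg_le m))]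
      simpa using sq_nonneg (∑ i, v i * (m:E3) i)
    have hae2 : ∀ᵐ m ∂sigma3, 0 ≤ (c - g m) * f m :=
      hpos.mono fun m hm => mul_nonneg (sub_nonneg.mpr (hg_le m)) hm
    have hval : ∫ m, (c - g m) * f m ∂sigma3 = c - ∫ m, g m * f m ∂sigma3 := by
      have : (fun m => (c - g m) * f m) = fun m => c * f m - g m * f m := by
        funext m; ring
      rw [this, integral_sub (hfi.const_mul c) hInt, integral_const_mul, hprob, mul_one]
    have h1 : 0 ≤ c - ∫ m, g m * f m ∂sigma3 := hval ▸ integral_nonneg_of_ae hae2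
    rcases lt_or_eq_of_le h1 with h | h
    · linarith
    · exfalso
      have hEq : (fun m => (c - g m) * f m) =ᵐ[sigma3] 0 :=
        (integral_eq_zero_iff_of_nonneg_ae hae2 hInt2).mp (hval.trans h.symm)
      have aeZ : ∀ᵐ m ∂sigma3, g m ≠ c := by
        have := measure_eq_zero_iff_ae_notMem.mp (null_max hv)
        exact this.mono fun m hm => hm
      apply hne_f
      filter_upwards [hEq, aeZ] with m h1 h2
      have : c - g m ≠ 0 := sub_ne_zero.mpr (Ne.symm h2)
      simpa [this] using h1

/-- For every probability density `f` on 𝕊², the matrix `Q = ∫ (m mᵀ − I/3) f dσ` is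
symmetric, traceless, and all its eigenvalues lie in the open interval `(−1/3, 2/3)`,
i.e. `Q ∈ 𝒬_phy`. -/
theorem stmt17 (f : S2 → ℝ) (hf : Measurable f)
    (hpos : ∀ᵐ m ∂sigma3, 0 ≤ f m) (hprob : ∫ m, f m ∂sigma3 = 1) :
    Qphy (secondMoment f) := by
  have hfi : Integrable f sigma3 := by
    by_contra h
    rw [integral_undef h] at hprob
    norm_num at hprob
  have hgmeas : ∀ i j : Fin 3, Continuous
      (fun m : S2 => (m : E3) i * (m : E3) j - (if i = j then (1 : ℝ) / 3 else 0)) :=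
    fun i j => ((coord_cont i).mul (coord_cont j)).sub continuous_const
  have hQint : ∀ i j : Fin 3, Integrable
      (fun m : S2 => ((m : E3) i * (m : E3) j - (if i = j then (1 : ℝ) / 3 else 0)) * f m)
      sigma3 := by
    intro i j
    refine hfi.bdd_mul (hgmeas i j).measurable.aestronglyMeasurable (c := 2) (Filter.Eventually.of_forall fun m => ?_)
    rw [Real.norm_eq_abs]
    exact integrand_abs_le m i j
  refine ⟨?_, ?_, ?_⟩
  · -- symmetric
    rw [Matrix.IsSymm]
    ext i j
    rw [Matrix.transpose_apply]
    show (∫ m : S2, ((m : E3) j * (m : E3) i - (if j = i then (1 : ℝ) / 3 else 0)) * f m ∂sigma3)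
      = ∫ m : S2, ((m : E3) i * (m : E3) j - (if i = j then (1 : ℝ) / 3 else 0)) * f m ∂sigma3
    congr 1
    funext m
    rw [mul_comm ((m : E3) j) ((m : E3) i)]
    congr 2
    simp [eq_comm]
  · -- traceless
    rw [Matrix.trace]
    show ∑ i : Fin 3, (∫ m : S2,
        ((m : E3) i * (m : E3) i - (if i = i then (1 : ℝ) / 3 else 0)) * f m ∂sigma3) = 0
    rw [← integral_finset_sum _ (fun i _ => hQint i i)]
    have hz : (fun m : S2 => ∑ i : Fin 3,
        ((m : E3) i * (m : E3) i - (if i = i then (1 : ℝ) / 3 else 0)) * f m)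
        = fun _ => (0 : ℝ) := by
      funext m
      rw [← Finset.sum_mul]
      have : ∑ i : Fin 3, ((m : E3) i * (m : E3) i - (if i = i then (1 : ℝ) / 3 else 0))
          = 0 := by
        simp only [if_pos rfl]
        rw [Finset.sum_sub_distrib]
        have h1 : ∑ i : Fin 3, (m : E3) i * (m : E3) i = 1 := by
          have := sum_sq_coords m
          simpa [sq] using this
        rw [h1]
        simp
      rw [this, zero_mul]
    rw [hz, integral_zero]
  · -- eigenvalue bounds
    intro μ hμ
    set Q := secondMoment f with hQ
    have hdet : (algebraMap ℝ Mat3 μ - Q).det = 0 := by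
      by_contra hd
      exact (spectrum.mem_iff.mp hμ)
        ((Matrix.isUnit_iff_isUnit_det _).mpr (isUnit_iff_ne_zero.mpr hd))
    obtain ⟨v, hv0, hveq⟩ := Matrix.exists_mulVec_eq_zero_iff.mpr hdet
    have heig : Q *ᵥ v = μ • v := by
      have h1 : (algebraMap ℝ Mat3 μ - Q) *ᵥ v = algebraMap ℝ Mat3 μ *ᵥ v - Q *ᵥ v :=
        Matrix.sub_mulVec _ _ _
      have h2 : algebraMap ℝ Mat3 μ *ᵥ v = μ • v := by
        rw [Algebra.algebraMap_eq_smul_one, Matrix.smul_mulVec, Matrix.one_mulVec]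
      rw [hveq, h2] at h1
      exact (sub_eq_zero.mp h1.symm).symm
    set c := ∑ i, v i ^ 2 with hc
    have hcpos : 0 < c := by
      obtain ⟨i, hi⟩ := Function.ne_iff.mp hv0
      exact Finset.sum_pos' (fun j _ => sq_nonneg _)
        ⟨i, Finset.mem_univ i, sq_pos_of_ne_zero (by simpa using hi : v i ≠ 0)⟩
    -- the quadratic form, two ways
    have hdot : ∑ i, ∑ j, v i * Q i j * v j = μ * c := by
      have h1 : ∀ i, ∑ j, v i * Q i j * v j = v i * (Q *ᵥ v) i := by
        intro i
        rw [Matrix.mulVec, dotProduct, Finset.mul_sum]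
        exact Finset.sum_congr rfl fun j _ => by ring
      calc ∑ i, ∑ j, v i * Q i j * v j = ∑ i, v i * (Q *ᵥ v) i :=
            Finset.sum_congr rfl fun i _ => h1 i
        _ = ∑ i, μ * v i ^ 2 := by
            rw [heig]
            exact Finset.sum_congr rfl fun i _ => by
              simp [Pi.smul_apply, smul_eq_mul]; ring
        _ = μ * c := by rw [hc, Finset.mul_sum]
    have hkey : ∑ i, ∑ j, v i * Q i j * v j
        = (∫ m, (∑ i, v i * (m:E3) i)^2 * f m ∂sigma3) - c / 3 := by
      have ha : ∀ i j : Fin 3, v i * Q i j * v j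
          = ∫ m : S2, (v i * v j) *
            (((m : E3) i * (m : E3) j - (if i = j then (1 : ℝ) / 3 else 0)) * f m) ∂sigma3 := by
        intro i j
        rw [integral_const_mul]
        have : Q i j = ∫ m : S2,
            ((m : E3) i * (m : E3) j - (if i = j then (1 : ℝ) / 3 else 0)) * f m ∂sigma3 := rfl
        rw [this]; ring
      have hint : ∀ i j : Fin 3, Integrable (fun m : S2 => (v i * v j) *
          (((m : E3) i * (m : E3) j - (if i = j then (1 : ℝ) / 3 else 0)) * f m)) sigma3 :=
        fun i j => (hQint i j).const_mul _
      calc ∑ i, ∑ j, v i * Q i j * v j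
          = ∑ i, ∑ j, ∫ m : S2, (v i * v j) *
            (((m : E3) i * (m : E3) j - (if i = j then (1 : ℝ) / 3 else 0)) * f m) ∂sigma3 :=
            Finset.sum_congr rfl fun i _ => Finset.sum_congr rfl fun j _ => ha i j
        _ = ∑ i, ∫ m : S2, ∑ j, (v i * v j) *
            (((m : E3) i * (m : E3) j - (if i = j then (1 : ℝ) / 3 else 0)) * f m) ∂sigma3 :=
            Finset.sum_congr rfl fun i _ =>
              (integral_finset_sum _ fun j _ => hint i j).symm
        _ = ∫ m : S2, ∑ i, ∑ j, (v i * v j) *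
            (((m : E3) i * (m : E3) j - (if i = j then (1 : ℝ) / 3 else 0)) * f m) ∂sigma3 :=
            (integral_finset_sum _ fun i _ =>
              integrable_finset_sum _ fun j _ => hint i j).symm
        _ = ∫ m : S2, ((∑ i, v i * (m:E3) i)^2 - c / 3) * f m ∂sigma3 := by
            congr 1
            funext m
            rw [hc]
            simp only [Fin.sum_univ_three]
            norm_num [Fin.ext_iff]
            ring
        _ = (∫ m, (∑ i, v i * (m:E3) i)^2 * f m ∂sigma3) - c / 3 := by
            have : (fun m : S2 => ((∑ i, v i * (m:E3) i)^2 - c / 3) * f m)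
                = fun m : S2 => (∑ i, v i * (m:E3) i)^2 * f m - (c/3) * f m := by
              funext m; ring
            rw [this, integral_sub ?_ (hfi.const_mul _), integral_const_mul, hprob, mul_one]
            · refine hfi.bdd_mul ?_ (c := c) (Filter.Eventually.of_forall fun m => ?_)
              · exact ((continuous_finset_sum _ fun i _ =>
                  continuous_const.mul (coord_cont i)).pow 2).measurable.aestronglyMeasurable
              · rw [Real.norm_eq_abs, abs_of_nonneg (sq_nonneg _)]
                calc (∑ i, v i * (m:E3) i)^2 ≤ (∑ i, v i^2) * ∑ i, ((m:E3) i)^2 :=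
                      Finset.sum_mul_sq_le_sq_mul_sq _ _ _
                  _ = c := by rw [sum_sq_coords, mul_one, hc]
      done
    obtain ⟨hlow, hhigh⟩ := moment_bounds f hpos hprob hfi hv0
    rw [hkey] at hdot
    constructor
    · nlinarith
    · nlinarith
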